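/- Every nontrivial bicyclic unit u_{g,h} = 1 + (g−1)hĝ in the group algebra F_2 D_{2p} is a unitary unit with respect to the canonical involution, i.e., (u_{g,h})* = u_{g,h}^{-1}. -/

import Mathlib

set_option maxHeartbeats 1000000

open MonoidAlgebra

/-- The canonical involution of the group algebra `F₂ D₂ₚ`, the linear
extension of `g ↦ g⁻¹`. -/
noncomputable def canonicalInvolution (p : ℕ)
    (x : MonoidAlgebra (ZMod 2) (DihedralGroup p)) :
    MonoidAlgebra (ZMod 2) (DihedralGroup p) :=
  MonoidAlgebra.mapDomain (fun g => g⁻¹) x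

section Aux
open DihedralGroup
variable {p : ℕ}

lemma ci_add (a b : MonoidAlgebra (ZMod 2) (DihedralGroup p)) :
    canonicalInvolution p (a + b) = canonicalInvolution p a + canonicalInvolution p b :=
  MonoidAlgebra.mapDomain_add _ _ _

lemma ci_of (a : DihedralGroup p) :
    canonicalInvolution p (MonoidAlgebra.of (ZMod 2) (DihedralGroup p) a)
      = MonoidAlgebra.of (ZMod 2) (DihedralGroup p) a⁻¹ :=
  MonoidAlgebra.mapDomain_single

lemma ci_one : canonicalInvolution p (1 : MonoidAlgebra (ZMod 2) (DihedralGroup p)) = 1 := by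
  have := ci_of (p := p) 1
  simpa [← MonoidAlgebra.one_def] using this

lemma two_eq_zero' : (1 : MonoidAlgebra (ZMod 2) (DihedralGroup p)) + 1 = 0 := by
  rw [MonoidAlgebra.one_def, ← MonoidAlgebra.single_add]
  norm_num
  rfl

lemma add_self' (a : MonoidAlgebra (ZMod 2) (DihedralGroup p)) : a + a = 0 := by
  have : (1 + 1) * a = a + a := by rw [add_mul, one_mul]
  rw [← this, two_eq_zero', zero_mul]

end Aux

theorem stmt9 (p : ℕ) (hp : p.Prime) (hodd : Odd p)
    (g h : DihedralGroup p) :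
    let o := MonoidAlgebra.of (ZMod 2) (DihedralGroup p)
    let ghat := ∑ i ∈ Finset.range (orderOf g), o (g ^ i)
    let u := 1 + (o g - 1) * o h * ghat
    u ≠ 1 →
      canonicalInvolution p u * u = 1 ∧ u * canonicalInvolution p u = 1 := by
  intro o ghat u hu
  -- key: o g * ghat = ghat
  have hpow : ghat = ∑ k ∈ Finset.range (orderOf g), (o g) ^ k :=
    Finset.sum_congr rfl fun k _ => map_pow o g k
  have key0 : (o g - 1) * ghat = 0 := by
    rw [hpow, mul_geom_sum, ← map_pow, pow_orderOf_eq_one, map_one, sub_self]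
  have key : o g * ghat = ghat := by
    have hd : o g * ghat - ghat = 0 := by rw [← key0]; noncomm_ring
    exact sub_eq_zero.mp hd
  obtain ⟨i⟩ | ⟨i⟩ := g
  · -- rotation: u = 1, contradiction
    exfalso
    apply hu
    have hz : (o (DihedralGroup.r i) - 1) * o h * ghat = 0 := by
      have hcomm : o (DihedralGroup.r i) * o h * ghat = o h * ghat := by
        obtain ⟨j⟩ | ⟨j⟩ := h
        · have hcr : DihedralGroup.r i * DihedralGroup.r j
              = DihedralGroup.r j * DihedralGroup.r i := by
            rw [DihedralGroup.r_mul_r, DihedralGroup.r_mul_r, add_comm]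
          rw [← map_mul, hcr, map_mul, mul_assoc, key]
        · have : DihedralGroup.r i * DihedralGroup.sr j
              = DihedralGroup.sr j * (DihedralGroup.r i)⁻¹ := by
            show _ = _ * DihedralGroup.r (-i)
            rw [DihedralGroup.r_mul_sr, DihedralGroup.sr_mul_r, sub_eq_add_neg]
          have hinv : o (DihedralGroup.r i)⁻¹ * ghat = ghat := by
            calc o (DihedralGroup.r i)⁻¹ * ghat
                = o (DihedralGroup.r i)⁻¹ * (o (DihedralGroup.r i) * ghat) := by rw [key]
              _ = ghat := by rw [← mul_assoc, ← map_mul, inv_mul_cancel, map_one, one_mul]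
          rw [← map_mul, this, map_mul, mul_assoc, hinv]
      have : (o (DihedralGroup.r i) - 1) * o h * ghat
          = o (DihedralGroup.r i) * o h * ghat - o h * ghat := by noncomm_ring
      rw [this, hcomm, sub_self]
    show u = 1
    show 1 + (o (DihedralGroup.r i) - 1) * o h * ghat = 1
    rw [hz, add_zero]
  · -- reflection case
    set G := DihedralGroup.sr i with hG
    have hgg : G * G = 1 := DihedralGroup.sr_mul_self i
    have hginv : G⁻¹ = G := by
      rw [inv_eq_iff_mul_eq_one, hgg]
    have hghat : ghat = 1 + o G := by
      show (∑ i ∈ Finset.range (orderOf G), o (G ^ i)) = _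
      rw [DihedralGroup.orderOf_sr, Finset.sum_range_succ, Finset.sum_range_one, pow_zero,
        pow_one, map_one]
    have hneg : ∀ a : MonoidAlgebra (ZMod 2) (DihedralGroup p), -a = a := by
      intro a
      rw [neg_eq_iff_add_eq_zero, add_self']
    have hx : o G * o G = 1 := by rw [← map_mul, hgg, map_one]
    -- expand u
    have hu' : u = 1 + o (G * h) + o (G * h * G) + o h + o (h * G) := by
      show 1 + (o G - 1) * o h * ghat = _
      rw [hghat]
      have e : (o G - 1) * o h * (1 + o G)
          = o G * o h + o G * o h * o G - o h - o h * o G := by noncomm_ring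
      rw [e, ← map_mul, ← map_mul, ← map_mul]
      rw [sub_eq_add_neg, sub_eq_add_neg, hneg, hneg]
      abel
    -- involution of u
    have hciu : canonicalInvolution p u = 1 + o (G * h⁻¹) + o (G * h⁻¹ * G) + o h⁻¹ + o (h⁻¹ * G) := by
      rw [hu', ci_add, ci_add, ci_add, ci_add, ci_one, ci_of, ci_of, ci_of, ci_of]
      simp only [mul_inv_rev, hginv]
      noncomm_ring
    -- show ci u = u
    have hsame : canonicalInvolution p u = u := by
      rw [hciu, hu']
      obtain ⟨j⟩ | ⟨j⟩ := h
      · -- h rotation: G * h * G = h⁻¹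
        have hc : G * DihedralGroup.r j * G = (DihedralGroup.r j)⁻¹ := by
          show _ = DihedralGroup.r (-j)
          rw [hG, DihedralGroup.sr_mul_r, DihedralGroup.sr_mul_sr]
          ring_nf
        have hgg' : ∀ a : DihedralGroup p, a * G * G = a := fun a => by
          rw [mul_assoc, hgg, mul_one]
        rw [← hc]
        simp only [← mul_assoc, hgg, hgg', one_mul]
        abel
      · -- h reflection: h⁻¹ = h
        have : (DihedralGroup.sr j)⁻¹ = DihedralGroup.sr j := by
          rw [inv_eq_iff_mul_eq_one, DihedralGroup.sr_mul_self]
        rw [this]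
    -- u * u = 1
    have husq : u * u = 1 := by
      show (1 + (o G - 1) * o h * ghat) * (1 + (o G - 1) * o h * ghat) = 1
      rw [hghat]
      have hsq : (1 + o G) * (o G - 1) = o G + o G * o G - 1 - o G := by noncomm_ring
      have hzero : (1 + o G) * (o G - 1) = 0 := by
        rw [hsq, hx]; abel
      have expand : (1 + (o G - 1) * o h * (1 + o G)) * (1 + (o G - 1) * o h * (1 + o G))
          = 1 + ((o G - 1) * o h * (1 + o G) + (o G - 1) * o h * (1 + o G))
            + (o G - 1) * o h * ((1 + o G) * (o G - 1)) * o h * (1 + o G) := by noncomm_ring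
      rw [expand, hzero, add_self']
      noncomm_ring
    rw [hsame]
    exact ⟨husq, husq⟩
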